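/- (Inter-agent collision avoidance with a common knot vector, Proposition 2 with Remark 4.) Let z¹ and z² be two B-spline curves of the same order d defined over the same strictly increasing knot vector τ_0 < … < τ_m, with control points p^1_0,…,p^1_n and p^2_0,…,p^2_n respectively (n = m − d). Suppose that for every index i with d − 1 ≤ i ≤ n there exists a vector c_i ∈ ℝ^q such that ⟨c_i, p^1_{j_1}⟩ < ⟨c_i, p^2_{j_2}⟩ for all j_1, j_2 with i − d + 1 ≤ j_1, j_2 ≤ i. Then the two curves never collide: z¹(t) ≠ z²(t) for every t with τ_{d−1} ≤ t < τ_{n+1}. -/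

import Mathlib

/-- Cox–de Boor B-spline basis function `B_{i,d}(t)` of order `d` for the knot
vector `τ`.  In Lean, division by zero yields zero, which matches the standard
convention that any term of the recursion whose denominator vanishes is taken
to be zero. -/
noncomputable def bspline (τ : ℕ → ℝ) : ℕ → ℕ → ℝ → ℝ
  | 0, _, _ => 0
  | 1, i, t => if τ i ≤ t ∧ t < τ (i + 1) then 1 else 0
  | d + 2, i, t =>
      (t - τ i) / (τ (i + d + 1) - τ i) * bspline τ (d + 1) i t
      + (τ (i + d + 2) - t) / (τ (i + d + 2) - τ (i + 1)) * bspline τ (d + 1) (i + 1) t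
open scoped RealInnerProductSpace

namespace BAux
variable (τ : ℕ → ℝ) (m : ℕ)

lemma mono (hτ : ∀ j, j < m → τ j < τ (j + 1)) : ∀ b, b ≤ m → ∀ a, a ≤ b → τ a ≤ τ b := by
  intro b
  induction b with
  | zero => intro _ a ha; simp [Nat.le_zero.mp ha]
  | succ n ih =>
    intro hb a ha
    rcases Nat.lt_or_ge a (n+1) with h | h
    · exact le_trans (ih (by omega) a (by omega)) (le_of_lt (hτ n (by omega)))
    · have : a = n + 1 := by omega
      simp [this]

lemma smono (hτ : ∀ j, j < m → τ j < τ (j + 1)) {a b : ℕ} (h : a < b) (hb : b ≤ m) :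
    τ a < τ b :=
  lt_of_lt_of_le (hτ a (by omega)) (mono τ m hτ b hb (a+1) h)

lemma bspline_succ (d j : ℕ) (t : ℝ) (hd : 1 ≤ d) :
    bspline τ (d + 1) j t =
      (t - τ j) / (τ (j + d) - τ j) * bspline τ d j t
      + (τ (j + d + 1) - t) / (τ (j + d + 1) - τ (j + 1)) * bspline τ d (j + 1) t := by
  obtain ⟨e, rfl⟩ := Nat.exists_eq_succ_of_ne_zero (by omega : d ≠ 0)
  rfl

lemma zero_of_lt (hτ : ∀ j, j < m → τ j < τ (j + 1)) :
    ∀ d j t, j + d ≤ m → t < τ j → bspline τ d j t = 0 := by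
  intro d
  induction d with
  | zero => intro j t _ _; rfl
  | succ n ih =>
    intro j t hjm h
    rcases Nat.eq_zero_or_pos n with rfl | hn
    · simp only [bspline]
      rw [if_neg]
      rintro ⟨h1, -⟩; linarith
    · rw [bspline_succ τ n j t hn, ih j t (by omega) h,
        ih (j+1) t (by omega) (lt_of_lt_of_le h (mono τ m hτ (j+1) (by omega) j (by omega)))]
      ring

lemma zero_of_ge (hτ : ∀ j, j < m → τ j < τ (j + 1)) :
    ∀ d j t, j + d ≤ m → τ (j + d) ≤ t → bspline τ d j t = 0 := by
  intro d
  induction d with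
  | zero => intro j t _ _; rfl
  | succ n ih =>
    intro j t hjm h
    rcases Nat.eq_zero_or_pos n with rfl | hn
    · simp only [bspline]
      rw [if_neg]
      rintro ⟨-, h2⟩; linarith
    · rw [bspline_succ τ n j t hn,
        ih j t (by omega) (le_trans (mono τ m hτ (j+n+1) (by omega) (j+n) (by omega)) h),
        ih (j+1) t (by omega) (by rw [show j+1+n = j+(n+1) from by omega]; exact h)]
      ring

lemma key (hτ : ∀ j, j < m → τ j < τ (j + 1)) (i : ℕ) (t : ℝ)
    (hi1 : τ i ≤ t) (hi2 : t < τ (i + 1)) :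
    ∀ d, 1 ≤ d → d - 1 ≤ i → i + d ≤ m →
      (∀ j, j + d ≤ m → 0 ≤ bspline τ d j t) ∧
      (∑ r ∈ Finset.range d, bspline τ d (i - (d - 1) + r) t = 1) := by
  intro d hd1
  induction d, hd1 using Nat.le_induction with
  | base =>
    intro _ him
    constructor
    · intro j _
      simp only [bspline]
      split <;> norm_num
    · simp only [Nat.sub_self, Nat.sub_zero, Finset.sum_range_one, Nat.add_zero, bspline]
      rw [if_pos ⟨hi1, hi2⟩]
  | succ d hd ih =>
    intro hdi him
    obtain ⟨hn, hs⟩ := ih (by omega) (by omega)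
    have hdi' : d ≤ i := by omega
    set a := i - d with ha
    have hai : a + d = i := by omega
    have hBa : bspline τ d a t = 0 := by
      apply zero_of_ge τ m hτ d a t (by omega)
      rw [hai]; exact hi1
    have hBtop : bspline τ d (i + 1) t = 0 :=
      zero_of_lt τ m hτ d (i+1) t (by omega) hi2
    constructor
    · -- nonnegativity at order d+1
      intro j hj
      rw [bspline_succ τ d j t hd]
      have t1 : 0 ≤ (t - τ j) / (τ (j + d) - τ j) * bspline τ d j t := by
        rcases eq_or_lt_of_le (hn j (by omega)) with h | h
        · rw [← h, mul_zero]
        · have hτj : τ j ≤ t := by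
            by_contra hcon
            exact absurd (zero_of_lt τ m hτ d j t (by omega) (lt_of_not_ge hcon))
              (ne_of_gt h)
          have hden : 0 < τ (j + d) - τ j :=
            sub_pos.mpr (smono τ m hτ (by omega) (by omega))
          exact mul_nonneg (div_nonneg (by linarith) (le_of_lt hden)) (le_of_lt h)
      have t2 : 0 ≤ (τ (j + d + 1) - t) / (τ (j + d + 1) - τ (j + 1)) * bspline τ d (j + 1) t := by
        rcases eq_or_lt_of_le (hn (j+1) (by omega)) with h | h
        · rw [← h, mul_zero]
        · have hτj : t < τ (j + d + 1) := by
            by_contra hcon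
            refine absurd (zero_of_ge τ m hτ d (j+1) t (by omega) ?_) (ne_of_gt h)
            rw [show j+1+d = j+d+1 from by omega]
            exact le_of_not_gt hcon
          have hden : 0 < τ (j + d + 1) - τ (j + 1) :=
            sub_pos.mpr (smono τ m hτ (by omega) (by omega))
          exact mul_nonneg (div_nonneg (by linarith) (le_of_lt hden)) (le_of_lt h)
      linarith
    · -- partition of unity at order d+1
      have hoff : i - (d + 1 - 1) = a := by omega
      rw [hoff]
      have hterm : ∀ r ∈ Finset.range (d + 1),
          bspline τ (d + 1) (a + r) t
            = ((fun k => (t - τ (a + k)) / (τ (a + k + d) - τ (a + k)) * bspline τ d (a + k) t) r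
                - (fun k => (t - τ (a + k)) / (τ (a + k + d) - τ (a + k)) * bspline τ d (a + k) t) (r + 1))
              + bspline τ d (a + 1 + r) t := by
        intro r hr
        simp only [Finset.mem_range] at hr
        rw [bspline_succ τ d (a + r) t hd]
        simp only []
        rw [show a + (r + 1) = a + r + 1 from by omega,
          show a + r + 1 + d = a + r + d + 1 from by omega,
          show a + 1 + r = a + r + 1 from by omega]
        have hD : τ (a + r + 1) < τ (a + r + d + 1) :=
          smono τ m hτ (by omega) (by omega)
        have hDne : τ (a + r + d + 1) - τ (a + r + 1) ≠ 0 := sub_ne_zero.mpr (ne_of_gt hD)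
        field_simp
        ring
      rw [Finset.sum_congr rfl hterm, Finset.sum_add_distrib, Finset.sum_range_sub']
      rw [Nat.add_zero, hBa, mul_zero,
        show a + (d + 1) = i + 1 from by omega, hBtop, mul_zero,
        Finset.sum_range_succ, show a + 1 + d = i + 1 from by omega, hBtop]
      have hs' : ∑ r ∈ Finset.range d, bspline τ d (a + 1 + r) t = 1 := by
        rw [show a + 1 = i - (d - 1) from by omega]
        exact hs
      rw [hs']
      ring

end BAux

/-- Proposition 2 with Remark 4: inter-agent collision avoidance
for two B-spline curves sharing the same knot vector (here `n = m - d`). -/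
theorem bspline_interagent_avoidance_common_knots (q m d : ℕ) (τ : ℕ → ℝ)
    (hτ : ∀ j, j < m → τ j < τ (j + 1))
    (hd : 1 ≤ d) (hdm : d ≤ m)
    (p1 p2 : ℕ → EuclideanSpace ℝ (Fin q))
    (hsep : ∀ i, d - 1 ≤ i → i ≤ m - d →
      ∃ c : EuclideanSpace ℝ (Fin q),
        ∀ j1 j2, i - (d - 1) ≤ j1 → j1 ≤ i → i - (d - 1) ≤ j2 → j2 ≤ i →
          ⟪c, p1 j1⟫ < ⟪c, p2 j2⟫)
    (t : ℝ) (ht1 : τ (d - 1) ≤ t) (ht2 : t < τ (m - d + 1)) :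
    (∑ j ∈ Finset.range (m - d + 1), bspline τ d j t • p1 j) ≠
      (∑ j ∈ Finset.range (m - d + 1), bspline τ d j t • p2 j) := by
  -- first, the interval [τ (d-1), τ (m-d+1)) is nonempty, so d - 1 ≤ m - d
  have hdmd : d - 1 ≤ m - d := by
    by_contra hcon
    have : τ (m - d + 1) ≤ τ (d - 1) :=
      BAux.mono τ m hτ (d - 1) (by omega) (m - d + 1) (by omega)
    linarith
  -- locate the knot interval containing t
  have hfind : ∀ N, N ≤ m - d → t < τ (N + 1) → d - 1 ≤ N →
      ∃ i, d - 1 ≤ i ∧ i ≤ m - d ∧ τ i ≤ t ∧ t < τ (i + 1) := by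
    intro N
    induction N with
    | zero =>
      intro h1 h2 h3
      exact ⟨0, by omega, by omega, by simpa [show d - 1 = 0 from by omega] using ht1, h2⟩
    | succ n ih =>
      intro h1 h2 h3
      by_cases hτn : τ (n + 1) ≤ t
      · exact ⟨n + 1, h3, h1, hτn, h2⟩
      · push_neg at hτn
        rcases Nat.lt_or_ge n (d - 1) with hlt | hge
        · have hEq : d - 1 = n + 1 := by omega
          rw [← hEq] at hτn
          linarith
        · exact ih (by omega) hτn hge
  obtain ⟨i, hi1, hi2, hit1, hit2⟩ := hfind (m - d) le_rfl ht2 hdmd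
  obtain ⟨c, hc⟩ := hsep i hi1 hi2
  obtain ⟨hn, hs⟩ := BAux.key τ m hτ i t hit1 hit2 d hd hi1 (by omega)
  -- the basis function vanishes outside Icc (i - (d-1)) i
  have hzero : ∀ j ∈ Finset.range (m - d + 1), j ∉ Finset.Icc (i - (d - 1)) i →
      bspline τ d j t = 0 := by
    intro j hj hj'
    simp only [Finset.mem_range] at hj
    simp only [Finset.mem_Icc, not_and_or, not_le] at hj'
    rcases hj' with h | h
    · apply BAux.zero_of_ge τ m hτ d j t (by omega)
      exact le_trans (BAux.mono τ m hτ i (by omega) (j + d) (by omega)) hit1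
    · apply BAux.zero_of_lt τ m hτ d j t (by omega)
      exact lt_of_lt_of_le hit2 (BAux.mono τ m hτ j (by omega) (i + 1) h)
  have hsub : Finset.Icc (i - (d - 1)) i ⊆ Finset.range (m - d + 1) := by
    intro j hj
    simp only [Finset.mem_Icc] at hj
    simp only [Finset.mem_range]
    omega
  have hred : ∀ p : ℕ → EuclideanSpace ℝ (Fin q),
      (∑ j ∈ Finset.range (m - d + 1), bspline τ d j t • p j)
        = ∑ j ∈ Finset.Icc (i - (d - 1)) i, bspline τ d j t • p j := by
    intro p
    refine (Finset.sum_subset hsub ?_).symm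
    intro j hj hj'
    rw [hzero j hj hj', zero_smul]
  rw [hred p1, hred p2]
  -- there is a basis function positive on the support interval
  have hpos : ∃ j0 ∈ Finset.Icc (i - (d - 1)) i, 0 < bspline τ d j0 t := by
    by_contra hcon
    push_neg at hcon
    have hz : ∑ r ∈ Finset.range d, bspline τ d (i - (d - 1) + r) t = 0 := by
      refine Finset.sum_eq_zero fun r hr => ?_
      simp only [Finset.mem_range] at hr
      refine le_antisymm (hcon _ ?_) (hn _ (by omega))
      simp only [Finset.mem_Icc]
      omega
    rw [hs] at hz
    norm_num at hz
  intro heq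
  have hlt : ⟪c, ∑ j ∈ Finset.Icc (i - (d - 1)) i, bspline τ d j t • p1 j⟫
      < ⟪c, ∑ j ∈ Finset.Icc (i - (d - 1)) i, bspline τ d j t • p2 j⟫ := by
    rw [inner_sum, inner_sum]
    simp only [real_inner_smul_right]
    obtain ⟨j0, hj0, hj0pos⟩ := hpos
    refine Finset.sum_lt_sum ?_ ⟨j0, hj0, ?_⟩
    · intro j hj
      simp only [Finset.mem_Icc] at hj
      exact mul_le_mul_of_nonneg_left (le_of_lt (hc j j hj.1 hj.2 hj.1 hj.2))
        (hn j (by omega))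
    · simp only [Finset.mem_Icc] at hj0
      exact mul_lt_mul_of_pos_left (hc j0 j0 hj0.1 hj0.2 hj0.1 hj0.2) hj0pos
  rw [heq] at hlt
  exact lt_irrefl _ hlt
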